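/- In ℤ[[q]] one has a(q)⁶·(q³;q³)_∞ ≡ a(q³)⁶·(q³;q³)_∞ + 9q·a(q³)⁵·(q⁹;q⁹)_∞³ (mod 27). -/

import Mathlib

/-- The Euler product `(q;q)_∞ = ∏_{k≥1} (1 - q^k)` as a formal power series over `ℤ`.
Its `n`-th coefficient agrees with that of any truncated product `∏_{k=1}^{N}(1-q^k)`
with `N ≥ n`. -/
noncomputable def eulerQ : PowerSeries ℤ :=
  PowerSeries.mk fun n =>
    PowerSeries.coeff n (∏ k ∈ Finset.range (n + 1), (1 - PowerSeries.X ^ (k + 1)))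

/-- Image of a power series under the substitution `q ↦ q^k` (intended for `k ≥ 1`). -/
noncomputable def substPow (k : ℕ) (f : PowerSeries ℤ) : PowerSeries ℤ :=
  PowerSeries.mk fun n => if k ∣ n then PowerSeries.coeff (n / k) f else 0

/-- Image of a power series under the substitution `q ↦ -q`. -/
noncomputable def substNeg (f : PowerSeries ℤ) : PowerSeries ℤ :=
  PowerSeries.rescale (-1 : ℤ) f

/-- Ramanujan's theta function `φ(q) = ∑_{n ∈ ℤ} q^{n²}`. -/
noncomputable def phiTheta : PowerSeries ℤ :=
  PowerSeries.mk fun n => (Set.ncard {m : ℤ | m ^ 2 = (n : ℤ)} : ℤ)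

/-- Ramanujan's theta function `ψ(q) = ∑_{n ≥ 0} q^{n(n+1)/2}`. -/
noncomputable def psiTheta : PowerSeries ℤ :=
  PowerSeries.mk fun n => (Set.ncard {m : ℕ | m * (m + 1) / 2 = n} : ℤ)

/-- The cubic theta function `a(q) = ∑_{m,n ∈ ℤ} q^{m² + mn + n²}`. -/
noncomputable def aCubic : PowerSeries ℤ :=
  PowerSeries.mk fun n =>
    (Set.ncard {p : ℤ × ℤ | p.1 ^ 2 + p.1 * p.2 + p.2 ^ 2 = (n : ℤ)} : ℤ)

/-- The theta function `X(q) = ∑_{n ∈ ℤ} q^{3n² + 2n}`. -/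
noncomputable def xTheta : PowerSeries ℤ :=
  PowerSeries.mk fun n => (Set.ncard {m : ℤ | 3 * m ^ 2 + 2 * m = (n : ℤ)} : ℤ)

/-- The quadratic form `Q(m₁,…,m₅) = ∑ mᵢ² + ∑_{i<j} mᵢ mⱼ`. -/
def frobQ (v : Fin 5 → ℤ) : ℤ :=
  (∑ i, v i ^ 2) + ∑ i, ∑ j, if i < j then v i * v j else 0

/-- The theta series `∑_{m₁,…,m₅ ∈ ℤ} q^{Q(m₁,…,m₅)}`. -/
noncomputable def frobTheta : PowerSeries ℤ :=
  PowerSeries.mk fun n => (Set.ncard {v : Fin 5 → ℤ | frobQ v = (n : ℤ)} : ℤ)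

/-- The 6-colored generalized Frobenius partition function `cφ₆(n)`, defined by
`∑_{n≥0} cφ₆(n) qⁿ = (q;q)_∞^{-6} · ∑_{m₁,…,m₅} q^{Q(m₁,…,m₅)}`; here `(q;q)_∞^{-1}` is
realized via `PowerSeries.invOfUnit` (the constant coefficient of `eulerQ` is `1`). -/
noncomputable def cphi6 (n : ℕ) : ℤ :=
  PowerSeries.coeff n (PowerSeries.invOfUnit eulerQ 1 ^ 6 * frobTheta)



open PowerSeries Finset

lemma sp_coeff (k : ℕ) (f : PowerSeries ℤ) (n : ℕ) :
    coeff n (substPow k f) = if k ∣ n then coeff (n / k) f else 0 := by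
  simp [substPow]

lemma sp_add (k : ℕ) (f g : PowerSeries ℤ) :
    substPow k (f + g) = substPow k f + substPow k g := by
  ext n; simp only [sp_coeff, map_add]; split <;> simp

lemma sp_neg (k : ℕ) (f : PowerSeries ℤ) : substPow k (-f) = -(substPow k f) := by
  ext n; simp only [sp_coeff, map_neg]; split <;> simp

lemma sp_one {k : ℕ} (hk : 0 < k) : substPow k 1 = 1 := by
  ext n
  rw [sp_coeff]
  by_cases h : k ∣ n
  · rw [if_pos h, PowerSeries.coeff_one, PowerSeries.coeff_one]
    obtain ⟨c, rfl⟩ := h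
    rw [Nat.mul_div_cancel_left _ hk]
    by_cases hc : c = 0
    · subst hc; simp
    · rw [if_neg hc, if_neg (by positivity)]
  · rw [if_neg h, PowerSeries.coeff_one, if_neg (by rintro rfl; exact h ⟨0, rfl⟩)]

lemma sp_X_pow {k : ℕ} (hk : 0 < k) (a : ℕ) :
    substPow k ((PowerSeries.X : PowerSeries ℤ) ^ a) = PowerSeries.X ^ (k * a) := by
  ext n
  rw [sp_coeff, PowerSeries.coeff_X_pow]
  by_cases h : k ∣ n
  · rw [if_pos h, PowerSeries.coeff_X_pow]
    obtain ⟨c, rfl⟩ := h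
    rw [Nat.mul_div_cancel_left _ hk]
    by_cases hc : c = a
    · subst hc; simp
    · rw [if_neg hc, if_neg (by intro hh; exact hc (Nat.eq_of_mul_eq_mul_left hk hh))]
  · rw [if_neg h, PowerSeries.coeff_X_pow, if_neg (by rintro rfl; exact h ⟨a, rfl⟩)]

lemma sp_mul {k : ℕ} (hk : 0 < k) (f g : PowerSeries ℤ) :
    substPow k (f * g) = substPow k f * substPow k g := by
  ext n
  have hr : coeff n (substPow k f * substPow k g)
      = ∑ q ∈ (antidiagonal n).filter (fun q => k ∣ q.1 ∧ k ∣ q.2),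
          (coeff (q.1 / k) f) * (coeff (q.2 / k) g) := by
    rw [PowerSeries.coeff_mul]
    rw [← Finset.sum_filter_of_ne (p := fun q => k ∣ q.1 ∧ k ∣ q.2)]
    · apply Finset.sum_congr rfl
      rintro ⟨i, j⟩ hmem
      rw [Finset.mem_filter] at hmem
      obtain ⟨-, hi, hj⟩ := hmem
      simp only [sp_coeff]
      rw [if_pos hi, if_pos hj]
    · rintro ⟨i, j⟩ hmem hne
      simp only [sp_coeff] at hne
      constructor
      · by_contra hc; simp only [if_neg hc, zero_mul] at hne; exact hne rfl
      · by_contra hc; simp only [if_neg hc, mul_zero] at hne; exact hne rfl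
  rw [hr, sp_coeff]
  by_cases h : k ∣ n
  · obtain ⟨m, rfl⟩ := h
    rw [if_pos ⟨m, rfl⟩, Nat.mul_div_cancel_left _ hk, PowerSeries.coeff_mul]
    apply Finset.sum_nbij' (i := fun p => (k * p.1, k * p.2)) (j := fun q => (q.1 / k, q.2 / k))
    · rintro ⟨i, j⟩ hmem
      rw [Finset.HasAntidiagonal.mem_antidiagonal] at hmem
      simp only [Finset.mem_filter, Finset.HasAntidiagonal.mem_antidiagonal]
      exact ⟨by rw [← Nat.mul_add, hmem], ⟨i, rfl⟩, ⟨j, rfl⟩⟩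
    · rintro ⟨i, j⟩ hmem
      simp only [Finset.mem_filter, Finset.HasAntidiagonal.mem_antidiagonal] at hmem
      obtain ⟨hsum, ⟨a, rfl⟩, ⟨b, rfl⟩⟩ := hmem
      rw [Finset.HasAntidiagonal.mem_antidiagonal, Nat.mul_div_cancel_left _ hk, Nat.mul_div_cancel_left _ hk]
      rw [← Nat.mul_add] at hsum
      exact Nat.eq_of_mul_eq_mul_left hk hsum
    · rintro ⟨i, j⟩ _
      simp [Nat.mul_div_cancel_left _ hk]
    · rintro ⟨i, j⟩ hmem
      simp only [Finset.mem_filter, Finset.HasAntidiagonal.mem_antidiagonal] at hmem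
      obtain ⟨-, ⟨a, rfl⟩, ⟨b, rfl⟩⟩ := hmem
      simp [Nat.mul_div_cancel_left _ hk]
    · rintro ⟨i, j⟩ _
      simp [Nat.mul_div_cancel_left _ hk]
  · rw [if_neg h]
    symm
    apply Finset.sum_eq_zero
    rintro ⟨i, j⟩ hmem
    rw [Finset.mem_filter, Finset.HasAntidiagonal.mem_antidiagonal] at hmem
    exact absurd (hmem.1 ▸ Nat.dvd_add hmem.2.1 hmem.2.2) h

lemma sp_pow {k : ℕ} (hk : 0 < k) (f : PowerSeries ℤ) (j : ℕ) :
    substPow k (f ^ j) = (substPow k f) ^ j := by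
  induction j with
  | zero => simpa using sp_one hk
  | succ m ih => rw [pow_succ, sp_mul hk, ih, pow_succ]

lemma sp_sp {a b : ℕ} (ha : 0 < a) (hb : 0 < b) (f : PowerSeries ℤ) :
    substPow a (substPow b f) = substPow (a * b) f := by
  ext n
  simp only [sp_coeff]
  by_cases h : a ∣ n
  · obtain ⟨m, rfl⟩ := h
    rw [if_pos ⟨m, rfl⟩, Nat.mul_div_cancel_left _ ha]
    by_cases h2 : b ∣ m
    · obtain ⟨c, rfl⟩ := h2
      rw [if_pos ⟨c, rfl⟩, if_pos ⟨c, by ring⟩, Nat.mul_div_cancel_left _ hb, ← mul_assoc,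
        Nat.mul_div_cancel_left _ (Nat.mul_pos ha hb)]
    · rw [if_neg h2, if_neg (by
        rintro ⟨c, hc⟩
        exact h2 ⟨c, Nat.eq_of_mul_eq_mul_left ha (by rw [hc]; ring)⟩)]
  · rw [if_neg h, if_neg (fun hc => h (dvd_trans (Dvd.intro b rfl) hc))]

lemma sp_X_pow_mul {k : ℕ} (hk : 0 < k) (a : ℕ) (f : PowerSeries ℤ) :
    substPow k ((PowerSeries.X : PowerSeries ℤ) ^ a * f)
      = PowerSeries.X ^ (k * a) * substPow k f := by
  rw [sp_mul hk, sp_X_pow hk]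

open PowerSeries Finset

/-- partial Euler products -/
noncomputable def Pp (m : ℕ) : PowerSeries ℤ :=
  ∏ k ∈ Finset.range m, (1 - PowerSeries.X ^ (k + 1))

/-- agreement of coefficients up to degree n -/
def Agr (n : ℕ) (f g : PowerSeries ℤ) : Prop :=
  ∀ i ≤ n, PowerSeries.coeff i f = PowerSeries.coeff i g

lemma Agr.refl (n : ℕ) (f : PowerSeries ℤ) : Agr n f f := fun _ _ => rfl

lemma Agr.symm {n f g} (h : Agr n f g) : Agr n g f := fun i hi => (h i hi).symm

lemma Agr.trans {n f g h} (h1 : Agr n f g) (h2 : Agr n g h) : Agr n f h :=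
  fun i hi => (h1 i hi).trans (h2 i hi)

lemma Agr.mul {n f g f' g'} (h1 : Agr n f g) (h2 : Agr n f' g') : Agr n (f * f') (g * g') := by
  intro i hi
  rw [PowerSeries.coeff_mul, PowerSeries.coeff_mul]
  apply Finset.sum_congr rfl
  rintro ⟨a, b⟩ hmem
  rw [Finset.HasAntidiagonal.mem_antidiagonal] at hmem
  rw [h1 a (by omega), h2 b (by omega)]

lemma Agr.add {n f g f' g'} (h1 : Agr n f g) (h2 : Agr n f' g') : Agr n (f + f') (g + g') := by
  intro i hi; simp [h1 i hi, h2 i hi]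

/-- multiplication by a series of the form X^R * h, R > n, is invisible below degree n -/
lemma coeff_X_pow_mul_eq_zero {R i : ℕ} (h : i < R) (f : PowerSeries ℤ) :
    PowerSeries.coeff i (PowerSeries.X ^ R * f) = 0 := by
  rw [mul_comm, PowerSeries.coeff_mul_X_pow', if_neg (by omega)]

lemma Agr.add_X_pow_mul {n R : ℕ} (h : n < R) (f g : PowerSeries ℤ) :
    Agr n (f + PowerSeries.X ^ R * g) f := by
  intro i hi
  rw [map_add, coeff_X_pow_mul_eq_zero (by omega), add_zero]

/-- inverses of agreeing series agree -/
lemma Agr.inv {n : ℕ} {f g f' g' : PowerSeries ℤ} (hf : f * f' = 1) (hg : g * g' = 1)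
    (h : Agr n f g) : Agr n f' g' := by
  have key : f' - g' = ((g - f) * g') * f' := by
    have : f' * (f * g') = f' * (f * g') := rfl
    calc f' - g' = f' * 1 - g' * 1 := by ring
    _ = f' * (g * g') - g' * (f * f') := by rw [hf, hg]
    _ = ((g - f) * g') * f' := by ring
  intro i hi
  have hz : PowerSeries.coeff i ((g - f) * g') = 0 := by
    rw [PowerSeries.coeff_mul]
    apply Finset.sum_eq_zero
    rintro ⟨a, b⟩ hmem
    rw [Finset.HasAntidiagonal.mem_antidiagonal] at hmem
    rw [map_sub, h a (by omega), sub_self, zero_mul]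
  have : PowerSeries.coeff i (f' - g') = 0 := by
    rw [key, PowerSeries.coeff_mul]
    apply Finset.sum_eq_zero
    rintro ⟨a, b⟩ hmem
    rw [Finset.HasAntidiagonal.mem_antidiagonal] at hmem
    have hz' : PowerSeries.coeff a ((g - f) * g') = 0 := by
      rw [PowerSeries.coeff_mul]
      apply Finset.sum_eq_zero
      rintro ⟨c, d⟩ hmem'
      rw [Finset.HasAntidiagonal.mem_antidiagonal] at hmem'
      rw [map_sub, h c (by omega), sub_self, zero_mul]
    rw [hz', zero_mul]
  rw [map_sub] at this
  omega

/-- substPow 3 transports agreement -/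
lemma Agr.subst {k n : ℕ} {f g : PowerSeries ℤ} (h : Agr n f g) :
    Agr n (substPow k f) (substPow k g) := by
  intro i hi
  rw [sp_coeff, sp_coeff]
  split
  · exact h _ (le_trans (Nat.div_le_self _ _) hi)
  · rfl

lemma Pp_succ (m : ℕ) : Pp (m + 1) = Pp m * (1 - PowerSeries.X ^ (m + 1)) := by
  rw [Pp, Finset.prod_range_succ]; rfl

lemma Pp_agr {n m m' : ℕ} (hm : n < m) (hm' : n < m') : Agr n (Pp m) (Pp m') := by
  -- first: stability in one step beyond n
  have step : ∀ j, n < j → Agr n (Pp (j + 1)) (Pp j) := by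
    intro j hj
    rw [Pp_succ]
    intro i hi
    rw [mul_sub, mul_one, map_sub, PowerSeries.coeff_mul_X_pow', if_neg (by omega), sub_zero]
  have ge : ∀ j d, n < j → Agr n (Pp (j + d)) (Pp j) := by
    intro j d hj
    induction d with
    | zero => exact Agr.refl _ _
    | succ e ih => exact (step (j + e) (by omega)).trans ih
  rcases le_total m m' with hle | hle
  · obtain ⟨d, rfl⟩ := Nat.exists_eq_add_of_le hle
    exact (ge m d hm).symm
  · obtain ⟨d, rfl⟩ := Nat.exists_eq_add_of_le hle
    exact ge m' d hm'

lemma eulerQ_coeff (n : ℕ) : PowerSeries.coeff n eulerQ = PowerSeries.coeff n (Pp (n+1)) := by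
  simp [eulerQ, Pp]

lemma eulerQ_agr {n m : ℕ} (hm : n < m) : Agr n eulerQ (Pp m) := by
  intro i hi
  rw [eulerQ_coeff]
  exact Pp_agr (by omega) (by omega) i (le_refl i)

open Polynomial in
/-- `∏_{x<R} (1 + X^x ⬝ Y)` over the power series ring -/
noncomputable def Phi (R : ℕ) : Polynomial (PowerSeries ℤ) :=
  ∏ x ∈ Finset.range R, (1 + Polynomial.C (PowerSeries.X ^ x) * Polynomial.X)

open Polynomial in
noncomputable def Phir (r R : ℕ) : Polynomial (PowerSeries ℤ) :=
  ∏ x ∈ Finset.range R, (1 + Polynomial.C (PowerSeries.X ^ (3 * x + r)) * Polynomial.X)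

noncomputable def Ee (R m : ℕ) : PowerSeries ℤ := (Phi R).coeff m

lemma coeff_mul_linear_zero (p : Polynomial (PowerSeries ℤ)) (a : PowerSeries ℤ) :
    (p * (1 + Polynomial.C a * Polynomial.X)).coeff 0 = p.coeff 0 := by
  rw [mul_add, mul_one, Polynomial.coeff_add]
  have : p * (Polynomial.C a * Polynomial.X) = Polynomial.C a * (p * Polynomial.X) := by ring
  rw [this, Polynomial.coeff_C_mul, Polynomial.coeff_mul_X_zero, mul_zero, add_zero]

lemma coeff_mul_linear_succ (p : Polynomial (PowerSeries ℤ)) (a : PowerSeries ℤ) (m : ℕ) :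
    (p * (1 + Polynomial.C a * Polynomial.X)).coeff (m + 1)
      = p.coeff (m + 1) + a * p.coeff m := by
  rw [mul_add, mul_one, Polynomial.coeff_add]
  have : p * (Polynomial.C a * Polynomial.X) = Polynomial.C a * (p * Polynomial.X) := by ring
  rw [this, Polynomial.coeff_C_mul, Polynomial.coeff_mul_X]

lemma Ee_zero_zero : Ee 0 0 = 1 := by simp [Ee, Phi]
lemma Ee_zero_succ (m : ℕ) : Ee 0 (m + 1) = 0 := by simp [Ee, Phi, Polynomial.coeff_one]

lemma Phi_succ (R : ℕ) :
    Phi (R + 1) = Phi R * (1 + Polynomial.C (PowerSeries.X ^ R) * Polynomial.X) := by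
  rw [Phi, Finset.prod_range_succ]; rfl

lemma Ee_succ_zero (R : ℕ) : Ee (R + 1) 0 = Ee R 0 := by
  rw [Ee, Ee, Phi_succ, coeff_mul_linear_zero]

lemma Ee_succ_succ (R m : ℕ) :
    Ee (R + 1) (m + 1) = Ee R (m + 1) + PowerSeries.X ^ R * Ee R m := by
  rw [Ee, Ee, Ee, Phi_succ, coeff_mul_linear_succ]

lemma Ee_one : Ee R 0 = 1 := by
  induction R with
  | zero => exact Ee_zero_zero
  | succ S ih => rw [Ee_succ_zero]; exact ih

lemma Ee_geom (R : ℕ) :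
    Ee R 1 + PowerSeries.X ^ R = PowerSeries.X * Ee R 1 + 1 := by
  induction R with
  | zero => rw [Ee_zero_succ]; ring
  | succ S ih =>
    have h1 : Ee (S + 1) 1 = Ee S 1 + PowerSeries.X ^ S * Ee S 0 := Ee_succ_succ S 0
    have h2 : Ee S 0 = 1 := Ee_one
    rw [h1, h2, mul_one, pow_succ]
    linear_combination ih

/-- second (q-Pascal) recurrence -/
lemma Ee_P3 (R m : ℕ) :
    Ee (R + 1) (m + 1)
      = PowerSeries.X ^ (m + 1) * Ee R (m + 1) + PowerSeries.X ^ m * Ee R m := by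
  induction R generalizing m with
  | zero =>
    rcases m with - | m'
    · simp only [Ee_succ_succ, Ee_zero_succ, Ee_zero_zero]; ring
    · simp only [Ee_succ_succ, Ee_zero_succ, Ee_zero_zero]; ring
  | succ S ih =>
    rcases m with - | m'
    · have h1 : Ee (S + 1 + 1) 1 = Ee (S + 1) 1 + PowerSeries.X ^ (S + 1) * Ee (S + 1) 0 :=
        Ee_succ_succ (S + 1) 0
      have h3 : Ee (S + 1) 0 = 1 := Ee_one
      have h2 := Ee_geom (S + 1)
      linear_combination h1 + (PowerSeries.X ^ (S + 1) - 1) * h3 + h2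
    · have h1 : Ee (S + 1 + 1) (m' + 1 + 1)
          = Ee (S + 1) (m' + 1 + 1) + PowerSeries.X ^ (S + 1) * Ee (S + 1) (m' + 1) :=
        Ee_succ_succ (S + 1) (m' + 1)
      have hA := ih (m' + 1)
      have hB := ih m'
      have hE : Ee (S + 1) (m' + 1 + 1) = Ee S (m' + 1 + 1) + PowerSeries.X ^ S * Ee S (m' + 1) :=
        Ee_succ_succ S (m' + 1)
      have hF : Ee (S + 1) (m' + 1) = Ee S (m' + 1) + PowerSeries.X ^ S * Ee S m' :=
        Ee_succ_succ S m'
      linear_combination h1 + hA + PowerSeries.X ^ (S + 1) * hB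
        - PowerSeries.X ^ (m' + 1 + 1) * hE - PowerSeries.X ^ (m' + 1) * hF

/-- stability of `Ee` in `R` -/
lemma Ee_stab {n R m : ℕ} (hR : n < R) : Agr n (Ee (R + 1) m) (Ee R m) := by
  rcases m with - | m'
  · rw [Ee_succ_zero]; exact Agr.refl _ _
  · rw [Ee_succ_succ]
    exact Agr.add_X_pow_mul (by omega) _ _

lemma Ee_stab' {n R R' m : ℕ} (hR : n < R) (hR' : R ≤ R') : Agr n (Ee R' m) (Ee R m) := by
  obtain ⟨d, rfl⟩ := Nat.exists_eq_add_of_le hR'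
  clear hR'
  induction d with
  | zero => exact Agr.refl _ _
  | succ e ih => exact (Ee_stab (Nat.lt_of_lt_of_le hR (Nat.le_add_right R e))).trans ih

lemma sp_zero (k : ℕ) : substPow k (0 : PowerSeries ℤ) = 0 := by
  ext n; simp [sp_coeff]

lemma Phir_succ (r R : ℕ) :
    Phir r (R + 1) = Phir r R * (1 + Polynomial.C (PowerSeries.X ^ (3 * R + r)) * Polynomial.X) := by
  rw [Phir, Finset.prod_range_succ]; rfl

lemma split3 (R : ℕ) : Phi (3 * R) = Phir 0 R * (Phir 1 R * Phir 2 R) := by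
  induction R with
  | zero => simp [Phi, Phir]
  | succ S ih =>
    have h3 : 3 * (S + 1) = 3 * S + 1 + 1 + 1 := by ring
    rw [h3, Phi_succ, Phi_succ, Phi_succ, ih, Phir_succ, Phir_succ, Phir_succ]
    have e1 : 3 * S + 1 + 1 = 3 * S + 2 := by ring
    have e2 : 3 * S + 0 = 3 * S := by ring
    rw [e1, e2]
    ring

lemma Psi (r R m : ℕ) :
    (Phir r R).coeff m = PowerSeries.X ^ (r * m) * substPow 3 (Ee R m) := by
  induction R generalizing m with
  | zero =>
    rcases m with - | m'
    · rw [Ee_zero_zero, sp_one (by norm_num)]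
      simp [Phir]
    · rw [Ee_zero_succ, sp_zero]
      simp [Phir, Polynomial.coeff_one]
  | succ S ih =>
    rcases m with - | m'
    · rw [Phir_succ, coeff_mul_linear_zero, ih, Ee_succ_zero]
    · rw [Phir_succ, coeff_mul_linear_succ, ih, ih, Ee_succ_succ, sp_add,
        sp_mul (by norm_num : (0:ℕ) < 3), sp_X_pow (by norm_num : (0:ℕ) < 3)]
      ring

lemma P2 (R L : ℕ) :
    Ee (3 * R) L = ∑ p ∈ Finset.HasAntidiagonal.antidiagonal L, ∑ q ∈ Finset.HasAntidiagonal.antidiagonal p.2,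
      PowerSeries.X ^ (q.1 + 2 * q.2) *
        (substPow 3 (Ee R p.1) * (substPow 3 (Ee R q.1) * substPow 3 (Ee R q.2))) := by
  rw [Ee, split3, Polynomial.coeff_mul]
  apply Finset.sum_congr rfl
  rintro ⟨a, s⟩ -
  rw [Polynomial.coeff_mul, Finset.mul_sum]
  apply Finset.sum_congr rfl
  rintro ⟨b, c⟩ -
  rw [Psi, Psi, Psi]
  ring

noncomputable def uPS (m : ℕ) : PowerSeries ℤ := PowerSeries.invOfUnit (Pp m) 1

lemma Pp_const (m : ℕ) : PowerSeries.constantCoeff (Pp m) = 1 := by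
  rw [Pp, map_prod]
  apply Finset.prod_eq_one
  intro k _
  rw [map_sub, map_one, map_pow, PowerSeries.constantCoeff_X, zero_pow (by omega), sub_zero]

lemma Pp_mul_u (m : ℕ) : Pp m * uPS m = 1 :=
  PowerSeries.mul_invOfUnit _ _ (by rw [Pp_const]; rfl)

lemma inv_unique' {a b c : PowerSeries ℤ} (ha : a * c = 1) (hb : b * c = 1) : a = b := by
  calc a = a * (b * c) := by rw [hb, mul_one]
  _ = b * (a * c) := by ring
  _ = b := by rw [ha, mul_one]

lemma Pp_zero : Pp 0 = 1 := by simp [Pp]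

lemma u_zero : uPS 0 = 1 := by
  have h := Pp_mul_u 0
  rwa [Pp_zero, one_mul] at h

lemma u_rec (m : ℕ) :
    uPS (m + 1) = PowerSeries.X ^ (m + 1) * uPS (m + 1) + uPS m := by
  have key : (1 - PowerSeries.X ^ (m + 1)) * uPS (m + 1) = uPS m := by
    apply inv_unique' (c := Pp m)
    · have h : Pp m * ((1 - PowerSeries.X ^ (m + 1)) * uPS (m + 1))
          = Pp (m + 1) * uPS (m + 1) := by rw [Pp_succ]; ring
      calc (1 - PowerSeries.X ^ (m + 1)) * uPS (m + 1) * Pp m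
          = Pp (m + 1) * uPS (m + 1) := by rw [← h]; ring
      _ = 1 := Pp_mul_u (m + 1)
    · rw [mul_comm]; exact Pp_mul_u m
  linear_combination key

def CCh (m : ℕ) : ℕ := Nat.choose m 2

lemma CCh_succ (m : ℕ) : CCh (m + 1) = CCh m + m := by
  rw [CCh, CCh, Nat.choose_succ_succ, Nat.choose_one_right, add_comm]

lemma agr_unique {n m : ℕ} {f g A B : PowerSeries ℤ}
    (hf : Agr n f (PowerSeries.X ^ (m + 1) * f + PowerSeries.X ^ m * A))
    (hg : Agr n g (PowerSeries.X ^ (m + 1) * g + PowerSeries.X ^ m * B))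
    (hAB : Agr n A B) : Agr n f g := by
  intro i
  induction i using Nat.strong_induction_on with
  | _ i IH =>
    intro hi
    rw [hf i hi, hg i hi]
    simp only [map_add]
    congr 1
    · rw [mul_comm, PowerSeries.coeff_mul_X_pow', mul_comm (PowerSeries.X ^ (m+1)) g,
        PowerSeries.coeff_mul_X_pow']
      split
      · exact IH (i - (m + 1)) (by omega) (by omega)
      · rfl
    · rw [mul_comm, PowerSeries.coeff_mul_X_pow', mul_comm (PowerSeries.X ^ m) B,
        PowerSeries.coeff_mul_X_pow']
      split
      · exact hAB (i - m) (by omega)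
      · rfl

lemma K1 {n R : ℕ} (m : ℕ) (hR : n < R) :
    Agr n (Ee R m) (PowerSeries.X ^ (CCh m) * uPS m) := by
  induction m with
  | zero =>
    have h : (PowerSeries.X : PowerSeries ℤ) ^ (CCh 0) * uPS 0 = 1 := by
      rw [u_zero, mul_one, CCh, Nat.choose, pow_zero]
    intro i hi
    rw [Ee_one, h]
  | succ m ih =>
    have hf : Agr n (Ee R (m + 1))
        (PowerSeries.X ^ (m + 1) * Ee R (m + 1) + PowerSeries.X ^ m * Ee R m) := by
      intro i hi
      rw [((Ee_stab hR).symm : Agr n (Ee R (m+1)) (Ee (R+1) (m+1))) i hi, Ee_P3]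
    have hkey : (PowerSeries.X : PowerSeries ℤ) ^ (CCh (m + 1)) * uPS (m + 1)
        = PowerSeries.X ^ (m + 1) * (PowerSeries.X ^ (CCh (m + 1)) * uPS (m + 1))
          + PowerSeries.X ^ m * (PowerSeries.X ^ (CCh m) * uPS m) := by
      rw [CCh_succ]
      calc (PowerSeries.X : PowerSeries ℤ) ^ (CCh m + m) * uPS (m + 1)
          = PowerSeries.X ^ (CCh m + m) *
            (PowerSeries.X ^ (m + 1) * uPS (m + 1) + uPS m) := by rw [← u_rec]
        _ = _ := by ring
    have hg : Agr n (PowerSeries.X ^ (CCh (m + 1)) * uPS (m + 1))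
        (PowerSeries.X ^ (m + 1) * (PowerSeries.X ^ (CCh (m + 1)) * uPS (m + 1))
          + PowerSeries.X ^ m * (PowerSeries.X ^ (CCh m) * uPS m)) :=
      fun i hi => by rw [← hkey]
    exact agr_unique hf hg ih

/-- theta series of the shifted hexagonal form `3(x²+xy+y²)+x+2y` -/
noncomputable def Tser : PowerSeries ℤ :=
  PowerSeries.mk fun j =>
    (Set.ncard {c : ℤ × ℤ | 3*(c.1^2 + c.1*c.2 + c.2^2) + c.1 + 2*c.2 = (j : ℤ)} : ℤ)

lemma two_CCh (m : ℕ) : 2 * CCh m = m * (m - 1) := by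
  induction m with
  | zero => rfl
  | succ k ih =>
    rw [CCh_succ, Nat.mul_add, ih, Nat.add_sub_cancel]
    cases k with
    | zero => rfl
    | succ k' => rw [Nat.add_sub_cancel]; ring

lemma CCh_cast (m : ℕ) : (2 * CCh m : ℤ) = (m : ℤ) * ((m : ℤ) - 1) := by
  cases m with
  | zero =>
    have : CCh 0 = 0 := rfl
    simp [this]
  | succ k =>
    have h := two_CCh (k + 1)
    rw [Nat.add_sub_cancel] at h
    have h2 : ((2 * CCh (k + 1) : ℕ) : ℤ) = ((k : ℤ) + 1) * (k : ℤ) := by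
      rw [h]; push_cast; ring
    push_cast at h2 ⊢
    linear_combination h2

/-- the form is nonnegative and bounds its arguments -/
lemma form_bound {x y : ℤ} {n : ℕ} (h : 3*(x^2 + x*y + y^2) + x + 2*y ≤ (n:ℤ)) :
    -((n:ℤ)+1) ≤ x ∧ x ≤ (n:ℤ)+1 ∧ -((n:ℤ)+1) ≤ y ∧ y ≤ (n:ℤ)+1 := by
  have hn : (0:ℤ) ≤ (n:ℤ) := Int.natCast_nonneg n
  refine ⟨?_, ?_, ?_, ?_⟩
  · nlinarith [sq_nonneg (3*(x+2*y)+2), sq_nonneg (x + ((n:ℤ)+1)), sq_nonneg x]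
  · nlinarith [sq_nonneg (3*(x+2*y)+2), sq_nonneg (x - ((n:ℤ)+1)), sq_nonneg x]
  · nlinarith [sq_nonneg (2*x+y), sq_nonneg (3*y+1), sq_nonneg (y + ((n:ℤ)+1)), sq_nonneg y]
  · nlinarith [sq_nonneg (2*x+y), sq_nonneg (3*y+1), sq_nonneg (y - ((n:ℤ)+1)), sq_nonneg y]

lemma form_nonneg (x y : ℤ) : 0 ≤ 3*(x^2 + x*y + y^2) + x + 2*y := by
  nlinarith [sq_nonneg (3*(x+2*y)+2), sq_nonneg x]

/-- the `j`-th coefficient of `Tser` as a finite count -/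
lemma Tser_coeff (j : ℕ) :
    PowerSeries.coeff j Tser =
      (((Finset.Icc (-(j:ℤ)-1) ((j:ℤ)+1) ×ˢ Finset.Icc (-(j:ℤ)-1) ((j:ℤ)+1)).filter
        (fun c : ℤ × ℤ => 3*(c.1^2 + c.1*c.2 + c.2^2) + c.1 + 2*c.2 = (j:ℤ))).card : ℤ) := by
  rw [Tser, PowerSeries.coeff_mk]
  congr 1
  rw [← Set.ncard_coe_finset]
  congr 1
  ext ⟨x, y⟩
  simp only [Set.mem_setOf_eq, Finset.coe_filter, Finset.mem_product, Finset.mem_Icc,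
    Set.mem_setOf_eq, Finset.mem_coe]
  constructor
  · intro h
    obtain ⟨h1, h2, h3, h4⟩ := form_bound (n := j) (le_of_eq h)
    exact ⟨⟨⟨by linarith, by linarith⟩, ⟨by linarith, by linarith⟩⟩, h⟩
  · exact fun h => h.2

/-- the key ℤ-identity for the exponents -/
lemma expo_key {M q1 q2 : ℕ} (hs : q1 + q2 ≤ 3*M) :
    ((q1 + 2*q2 + 3*(CCh (3*M - (q1+q2)) + CCh q1 + CCh q2) : ℕ) : ℤ)
      = (CCh (3*M) : ℤ) + (3*(((q1:ℤ)-M)^2 + ((q1:ℤ)-M)*((q2:ℤ)-M) + ((q2:ℤ)-M)^2)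
        + ((q1:ℤ)-M) + 2*((q2:ℤ)-M)) := by
  have c1 := CCh_cast (3*M - (q1+q2))
  have c2 := CCh_cast q1
  have c3 := CCh_cast q2
  have c4 := CCh_cast (3*M)
  have hcast : (((3*M - (q1+q2)) : ℕ) : ℤ) = 3*(M:ℤ) - (q1:ℤ) - (q2:ℤ) := by push_cast; omega
  rw [hcast] at c1
  have h2 : 2 * ((q1 + 2*q2 + 3*(CCh (3*M - (q1+q2)) + CCh q1 + CCh q2) : ℕ) : ℤ)
      = 2 * ((CCh (3*M) : ℤ) + (3*(((q1:ℤ)-M)^2 + ((q1:ℤ)-M)*((q2:ℤ)-M) + ((q2:ℤ)-M)^2)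
        + ((q1:ℤ)-M) + 2*((q2:ℤ)-M))) := by
    push_cast
    push_cast at c1 c2 c3 c4
    linear_combination 3*c1 + 3*c2 + 3*c3 - c4
  linarith

lemma expo_ge' {M q1 q2 : ℕ} (hs : q1 + q2 ≤ 3*M) :
    CCh (3*M) ≤ q1 + 2*q2 + 3*(CCh (3*M - (q1+q2)) + CCh q1 + CCh q2) := by
  have h := expo_key hs
  have h2 := form_nonneg ((q1:ℤ)-M) ((q2:ℤ)-M)
  have : (CCh (3*M) : ℤ) ≤ ((q1 + 2*q2 + 3*(CCh (3*M - (q1+q2)) + CCh q1 + CCh q2) : ℕ) : ℤ) := by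
    rw [h]; linarith
  exact_mod_cast this

lemma expo_val {M q1 q2 j : ℕ} (hs : q1 + q2 ≤ 3*M)
    (hval : q1 + 2*q2 + 3*(CCh (3*M - (q1+q2)) + CCh q1 + CCh q2) = CCh (3*M) + j) :
    3*(((q1:ℤ)-M)^2 + ((q1:ℤ)-M)*((q2:ℤ)-M) + ((q2:ℤ)-M)^2)
      + ((q1:ℤ)-M) + 2*((q2:ℤ)-M) = (j:ℤ) := by
  have h := expo_key hs
  rw [hval] at h
  push_cast at h
  linarith

lemma expo_val_rev {M q1 q2 j : ℕ} (hs : q1 + q2 ≤ 3*M)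
    (hval : 3*(((q1:ℤ)-M)^2 + ((q1:ℤ)-M)*((q2:ℤ)-M) + ((q2:ℤ)-M)^2)
      + ((q1:ℤ)-M) + 2*((q2:ℤ)-M) = (j:ℤ)) :
    q1 + 2*q2 + 3*(CCh (3*M - (q1+q2)) + CCh q1 + CCh q2) = CCh (3*M) + j := by
  have h := expo_key hs
  rw [hval] at h
  exact_mod_cast h

lemma TT_count {n j M : ℕ} (hM : M = 3*n + 4) (hj : j ≤ n) :
    (∑ p ∈ Finset.HasAntidiagonal.antidiagonal (3*M), ∑ q ∈ Finset.HasAntidiagonal.antidiagonal p.2,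
      PowerSeries.coeff j ((PowerSeries.X : PowerSeries ℤ) ^
        (q.1 + 2*q.2 + 3*(CCh p.1 + CCh q.1 + CCh q.2) - CCh (3*M))))
    = PowerSeries.coeff j Tser := by
  rw [Finset.sum_sigma']
  simp only [PowerSeries.coeff_X_pow]
  rw [Finset.sum_boole, Tser_coeff]
  congr 1
  apply Finset.card_bij'
    (i := fun t _ => (((t.2.1 : ℤ) - M, (t.2.2 : ℤ) - M) : ℤ × ℤ))
    (j := fun c _ => (⟨(3*M - ((M + c.1).toNat + (M + c.2).toNat),
        (M + c.1).toNat + (M + c.2).toNat), ((M + c.1).toNat, (M + c.2).toNat)⟩ :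
        (_ : ℕ × ℕ) × ℕ × ℕ))
  · rintro ⟨⟨p1, s⟩, q1, q2⟩ ht
    simp only [Finset.mem_filter, Finset.mem_sigma, Finset.HasAntidiagonal.mem_antidiagonal] at ht
    obtain ⟨⟨hps, hq⟩, hcond⟩ := ht
    simp only at hq hcond ⊢
    have hs3 : q1 + q2 ≤ 3*M := by omega
    have hp1 : p1 = 3*M - (q1 + q2) := by omega
    rw [hp1] at hcond
    have hge := expo_ge' hs3
    have hval : q1 + 2*q2 + 3*(CCh (3*M - (q1+q2)) + CCh q1 + CCh q2) = CCh (3*M) + j := by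
      omega
    have hform := expo_val hs3 hval
    simp only [Finset.mem_filter, Finset.mem_product, Finset.mem_Icc]
    refine ⟨⟨⟨?_, ?_⟩, ?_, ?_⟩, hform⟩ <;>
      · have := form_bound (n := j) (le_of_eq hform)
        omega
  · rintro ⟨x, y⟩ hc
    simp only [Finset.mem_filter, Finset.mem_product, Finset.mem_Icc] at hc
    obtain ⟨⟨⟨hx1, hx2⟩, hy1, hy2⟩, hform⟩ := hc
    have hxM : (0:ℤ) ≤ M + x := by omega
    have hyM : (0:ℤ) ≤ M + y := by omega
    have hq1 : (((M + x).toNat : ℤ)) = M + x := Int.toNat_of_nonneg hxM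
    have hq2 : (((M + y).toNat : ℤ)) = M + y := Int.toNat_of_nonneg hyM
    have hs3 : (M + x).toNat + (M + y).toNat ≤ 3*M := by omega
    simp only [Finset.mem_filter, Finset.mem_sigma, Finset.HasAntidiagonal.mem_antidiagonal]
    refine ⟨⟨by omega, trivial⟩, ?_⟩
    have hform' : 3*((((M+x).toNat:ℤ)-M)^2 + (((M+x).toNat:ℤ)-M)*(((M+y).toNat:ℤ)-M)
        + (((M+y).toNat:ℤ)-M)^2) + (((M+x).toNat:ℤ)-M) + 2*(((M+y).toNat:ℤ)-M) = (j:ℤ) := by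
      rw [hq1, hq2]
      convert hform using 2 <;> ring
    have := expo_val_rev hs3 hform'
    have hge := expo_ge' hs3
    omega
  · rintro ⟨⟨p1, s⟩, q1, q2⟩ ht
    simp only [Finset.mem_filter, Finset.mem_sigma, Finset.HasAntidiagonal.mem_antidiagonal] at ht
    obtain ⟨⟨hps, hq⟩, -⟩ := ht
    have hq' : q1 + q2 = s := hq
    have hps' : p1 + s = 3*M := hps
    clear hq hps
    subst hq'
    have e1 : p1 = 3*M - (q1 + q2) := by omega
    subst e1
    have h1 : (M + ((q1:ℤ) - M)).toNat = q1 := by omega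
    have h2 : (M + ((q2:ℤ) - M)).toNat = q2 := by omega
    simp only [h1, h2]
  · rintro ⟨x, y⟩ hc
    simp only [Finset.mem_filter, Finset.mem_product, Finset.mem_Icc] at hc
    obtain ⟨⟨⟨hx1, hx2⟩, hy1, hy2⟩, -⟩ := hc
    simp only [Prod.mk.injEq]
    constructor <;> omega

noncomputable def vE : PowerSeries ℤ := PowerSeries.invOfUnit eulerQ 1

lemma eulerQ_mul_vE : eulerQ * vE = 1 := by
  apply PowerSeries.mul_invOfUnit
  have h0 : PowerSeries.constantCoeff eulerQ = PowerSeries.coeff 0 eulerQ := by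
    simp [PowerSeries.coeff_zero_eq_constantCoeff]
  rw [h0, eulerQ_coeff 0, PowerSeries.coeff_zero_eq_constantCoeff, Pp_const]
  rfl

lemma u_agr_vE {n m : ℕ} (h : n < m) : Agr n (uPS m) vE :=
  Agr.inv (Pp_mul_u m) eulerQ_mul_vE (eulerQ_agr h).symm

lemma sp3_mul_sp3vE : substPow 3 eulerQ * substPow 3 vE = 1 := by
  rw [← sp_mul (by norm_num : (0:ℕ) < 3), eulerQ_mul_vE, sp_one (by norm_num)]

lemma coeff_shift (Cc i : ℕ) (f : PowerSeries ℤ) :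
    PowerSeries.coeff (Cc + i) (PowerSeries.X ^ Cc * f) = PowerSeries.coeff i f := by
  rw [mul_comm, PowerSeries.coeff_mul_X_pow', if_pos (by omega), Nat.add_sub_cancel_left]

lemma sp3_u_closed {N R m : ℕ} (hNR : N < R) :
    Agr N (substPow 3 (Ee R m))
      (PowerSeries.X ^ (3 * CCh m) * substPow 3 (uPS m)) := by
  have h := Agr.subst (k := 3) (K1 m hNR)
  intro j hj
  rw [h j hj, sp_mul (by norm_num : (0:ℕ) < 3), sp_X_pow (by norm_num : (0:ℕ) < 3)]

lemma main_agr (n : ℕ) :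
    Agr n vE (Tser * (substPow 3 vE * (substPow 3 vE * substPow 3 vE))) := by
  intro i hi
  obtain ⟨M, hM⟩ : ∃ M, M = 3*n + 4 := ⟨_, rfl⟩
  obtain ⟨L, hL⟩ : ∃ L, L = 3*M := ⟨_, rfl⟩
  obtain ⟨Cc, hCc⟩ : ∃ c, c = CCh L := ⟨_, rfl⟩
  obtain ⟨N, hN⟩ : ∃ N, N = Cc + n := ⟨_, rfl⟩
  obtain ⟨R, hR⟩ : ∃ R, R = N + 1 := ⟨_, rfl⟩
  have hNR : N < R := by omega
  have hN3R : N < 3*R := by omega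
  set Vv := substPow 3 vE * (substPow 3 vE * substPow 3 vE) with hVv
  have h1 : Agr N (Ee (3*R) L) (PowerSeries.X ^ (CCh L) * uPS L) := K1 L hN3R
  have e1 : PowerSeries.coeff i vE = PowerSeries.coeff i (uPS L) :=
    ((u_agr_vE (show n < L by omega)) i hi).symm
  have e2 : PowerSeries.coeff i (uPS L) = PowerSeries.coeff (Cc + i) (Ee (3*R) L) := by
    rw [← coeff_shift Cc i (uPS L), hCc]
    exact (h1 (CCh L + i) (by omega)).symm
  have e3 : PowerSeries.coeff (Cc + i) (Ee (3*R) L)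
      = ∑ p ∈ Finset.HasAntidiagonal.antidiagonal L, ∑ q ∈ Finset.HasAntidiagonal.antidiagonal p.2,
          PowerSeries.coeff (Cc + i)
            (PowerSeries.X ^ (q.1 + 2*q.2) *
              (substPow 3 (Ee R p.1) * (substPow 3 (Ee R q.1) * substPow 3 (Ee R q.2)))) := by
    have h3 : L = 3 * M := hL
    rw [show (3:ℕ)*R = 3*R from rfl, P2 R L, map_sum]
    exact Finset.sum_congr rfl fun p _ => by rw [map_sum]
  -- termwise replacement
  have e4 : ∀ p ∈ Finset.HasAntidiagonal.antidiagonal L, ∀ q ∈ Finset.HasAntidiagonal.antidiagonal p.2,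
      PowerSeries.coeff (Cc + i)
        (PowerSeries.X ^ (q.1 + 2*q.2) *
          (substPow 3 (Ee R p.1) * (substPow 3 (Ee R q.1) * substPow 3 (Ee R q.2))))
      = PowerSeries.coeff (Cc + i)
          (PowerSeries.X ^ (q.1 + 2*q.2 + 3*(CCh p.1 + CCh q.1 + CCh q.2)) * Vv) := by
    rintro ⟨p1, s⟩ hp ⟨q1, q2⟩ hq
    rw [Finset.HasAntidiagonal.mem_antidiagonal] at hp hq
    simp only at hp hq ⊢
    have hp1 : p1 = 3*M - (q1 + q2) := by omega
    subst hp1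
    have hs3 : q1 + q2 ≤ 3*M := by omega
    -- stage A : replace Ee by closed form
    have hA : PowerSeries.coeff (Cc + i)
        (PowerSeries.X ^ (q1 + 2*q2) *
          (substPow 3 (Ee R (3*M - (q1+q2))) * (substPow 3 (Ee R q1) * substPow 3 (Ee R q2))))
        = PowerSeries.coeff (Cc + i)
          (PowerSeries.X ^ (q1 + 2*q2 + 3*(CCh (3*M - (q1+q2)) + CCh q1 + CCh q2)) *
            (substPow 3 (uPS (3*M - (q1+q2))) * (substPow 3 (uPS q1) * substPow 3 (uPS q2)))) := by
      have hAgr : Agr N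
          (PowerSeries.X ^ (q1 + 2*q2) *
            (substPow 3 (Ee R (3*M - (q1+q2))) * (substPow 3 (Ee R q1) * substPow 3 (Ee R q2))))
          (PowerSeries.X ^ (q1 + 2*q2) *
            ((PowerSeries.X ^ (3*CCh (3*M - (q1+q2))) * substPow 3 (uPS (3*M - (q1+q2)))) *
              ((PowerSeries.X ^ (3*CCh q1) * substPow 3 (uPS q1)) *
                (PowerSeries.X ^ (3*CCh q2) * substPow 3 (uPS q2))))) :=
        Agr.mul (Agr.refl _ _) (Agr.mul (sp3_u_closed hNR)
          (Agr.mul (sp3_u_closed hNR) (sp3_u_closed hNR)))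
      rw [hAgr (Cc + i) (by omega)]
      congr 1
      ring
    rw [hA]
    -- stage B : replace the u-product by Vv
    have hCe : Cc ≤ q1 + 2*q2 + 3*(CCh (3*M - (q1+q2)) + CCh q1 + CCh q2) := by
      rw [hCc, hL]
      exact expo_ge' hs3
    by_cases hcase : q1 + 2*q2 + 3*(CCh (3*M - (q1+q2)) + CCh q1 + CCh q2) ≤ Cc + i
    · -- near term : indices are large
      have hκ : q1 + 2*q2 + 3*(CCh (3*M - (q1+q2)) + CCh q1 + CCh q2)
          = CCh (3*M) + (q1 + 2*q2 + 3*(CCh (3*M - (q1+q2)) + CCh q1 + CCh q2) - Cc) := by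
        rw [hCc, hL] at hCe ⊢
        omega
      have hform := expo_val hs3 hκ
      have hbd := form_bound (n := n)
        (x := (q1:ℤ) - M) (y := (q2:ℤ) - M) (by rw [hform]; push_cast; omega)
      have hq1big : n < q1 := by omega
      have hq2big : n < q2 := by omega
      have hp1big : n < 3*M - (q1+q2) := by
        have h1 : (q1:ℤ) ≤ M + (n+1) := by omega
        have h2 : (q2:ℤ) ≤ M + (n+1) := by omega
        omega
      have hW : Agr n
          (substPow 3 (uPS (3*M - (q1+q2))) * (substPow 3 (uPS q1) * substPow 3 (uPS q2))) Vv :=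
        Agr.mul (Agr.subst (u_agr_vE hp1big))
          (Agr.mul (Agr.subst (u_agr_vE hq1big)) (Agr.subst (u_agr_vE hq2big)))
      rw [mul_comm, PowerSeries.coeff_mul_X_pow', if_pos hcase,
        mul_comm (PowerSeries.X ^ (q1 + 2*q2 + 3*(CCh (3*M - (q1+q2)) + CCh q1 + CCh q2))) Vv,
        PowerSeries.coeff_mul_X_pow', if_pos hcase]
      exact hW _ (by omega)
    · rw [mul_comm, PowerSeries.coeff_mul_X_pow', if_neg hcase,
        mul_comm (PowerSeries.X ^ (q1 + 2*q2 + 3*(CCh (3*M - (q1+q2)) + CCh q1 + CCh q2))) Vv,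
        PowerSeries.coeff_mul_X_pow', if_neg hcase]
  -- now rewrite the sum
  have e5 : ∑ p ∈ Finset.HasAntidiagonal.antidiagonal L, ∑ q ∈ Finset.HasAntidiagonal.antidiagonal p.2,
      PowerSeries.coeff (Cc + i)
        (PowerSeries.X ^ (q.1 + 2*q.2 + 3*(CCh p.1 + CCh q.1 + CCh q.2)) * Vv)
      = ∑ p ∈ Finset.HasAntidiagonal.antidiagonal L, ∑ q ∈ Finset.HasAntidiagonal.antidiagonal p.2,
        PowerSeries.coeff i
          (PowerSeries.X ^ (q.1 + 2*q.2 + 3*(CCh p.1 + CCh q.1 + CCh q.2) - CCh L) * Vv) := by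
    apply Finset.sum_congr rfl
    rintro ⟨p1, s⟩ hp
    apply Finset.sum_congr rfl
    rintro ⟨q1, q2⟩ hq
    rw [Finset.HasAntidiagonal.mem_antidiagonal] at hp hq
    simp only at hp hq ⊢
    have hp1 : p1 = 3*M - (q1 + q2) := by omega
    subst hp1
    have hs3 : q1 + q2 ≤ 3*M := by omega
    have hCe : CCh L ≤ q1 + 2*q2 + 3*(CCh (3*M - (q1+q2)) + CCh q1 + CCh q2) := by
      rw [hL]; exact expo_ge' hs3
    rw [← hCc] at hCe ⊢
    have hsplit : q1 + 2*q2 + 3*(CCh (3*M - (q1+q2)) + CCh q1 + CCh q2)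
        = Cc + (q1 + 2*q2 + 3*(CCh (3*M - (q1+q2)) + CCh q1 + CCh q2) - Cc) := by omega
    conv_lhs => rw [hsplit]
    rw [pow_add, mul_assoc, coeff_shift]
  have e6 : ∑ p ∈ Finset.HasAntidiagonal.antidiagonal L, ∑ q ∈ Finset.HasAntidiagonal.antidiagonal p.2,
      PowerSeries.coeff i
        (PowerSeries.X ^ (q.1 + 2*q.2 + 3*(CCh p.1 + CCh q.1 + CCh q.2) - CCh L) * Vv)
      = PowerSeries.coeff i
        ((∑ p ∈ Finset.HasAntidiagonal.antidiagonal L, ∑ q ∈ Finset.HasAntidiagonal.antidiagonal p.2,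
          (PowerSeries.X : PowerSeries ℤ) ^
            (q.1 + 2*q.2 + 3*(CCh p.1 + CCh q.1 + CCh q.2) - CCh L)) * Vv) := by
    rw [Finset.sum_mul, map_sum]
    apply Finset.sum_congr rfl
    intro p _
    rw [Finset.sum_mul, map_sum]
  have e7 : Agr n (∑ p ∈ Finset.HasAntidiagonal.antidiagonal L, ∑ q ∈ Finset.HasAntidiagonal.antidiagonal p.2,
      (PowerSeries.X : PowerSeries ℤ) ^
        (q.1 + 2*q.2 + 3*(CCh p.1 + CCh q.1 + CCh q.2) - CCh L)) Tser := by
    intro j hj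
    rw [map_sum]
    have : ∀ p ∈ Finset.HasAntidiagonal.antidiagonal L, PowerSeries.coeff j
        (∑ q ∈ Finset.HasAntidiagonal.antidiagonal p.2, (PowerSeries.X : PowerSeries ℤ) ^
          (q.1 + 2*q.2 + 3*(CCh p.1 + CCh q.1 + CCh q.2) - CCh L))
        = ∑ q ∈ Finset.HasAntidiagonal.antidiagonal p.2, PowerSeries.coeff j
          ((PowerSeries.X : PowerSeries ℤ) ^
            (q.1 + 2*q.2 + 3*(CCh p.1 + CCh q.1 + CCh q.2) - CCh L)) :=
      fun p _ => by rw [map_sum]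
    rw [Finset.sum_congr rfl this]
    rw [hL]
    exact TT_count hM hj
  calc PowerSeries.coeff i vE
      = PowerSeries.coeff (Cc + i) (Ee (3*R) L) := by rw [e1, e2]
    _ = _ := e3
    _ = ∑ p ∈ Finset.HasAntidiagonal.antidiagonal L, ∑ q ∈ Finset.HasAntidiagonal.antidiagonal p.2,
          PowerSeries.coeff (Cc + i)
            (PowerSeries.X ^ (q.1 + 2*q.2 + 3*(CCh p.1 + CCh q.1 + CCh q.2)) * Vv) := by
        apply Finset.sum_congr rfl
        intro p hp
        apply Finset.sum_congr rfl
        intro q hq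
        exact e4 p hp q hq
    _ = _ := e5
    _ = _ := e6
    _ = PowerSeries.coeff i (Tser * Vv) := by
        exact Agr.mul e7 (Agr.refl n Vv) i hi

lemma vE_eq : vE = Tser * (substPow 3 vE * (substPow 3 vE * substPow 3 vE)) :=
  PowerSeries.ext fun n => main_agr n n le_rfl

/-- THE KERNEL IDENTITY : `E₃³ = T'·E₁` -/
lemma kernel : (substPow 3 eulerQ) ^ 3 = Tser * eulerQ := by
  have hv := vE_eq
  have h2 := sp3_mul_sp3vE
  have h3 := eulerQ_mul_vE
  calc (substPow 3 eulerQ)^3 = (substPow 3 eulerQ)^3 * (eulerQ * vE) := by rw [h3, mul_one]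
  _ = (Tser * eulerQ) * ((substPow 3 eulerQ * substPow 3 vE) *
        ((substPow 3 eulerQ * substPow 3 vE) * (substPow 3 eulerQ * substPow 3 vE))) := by
      conv_lhs => rw [hv]
      ring
  _ = Tser * eulerQ := by rw [h2]; ring

/-- the kernel identity after `q ↦ q³` : `E₉³ = (T'∘³)·E₃` -/
lemma kernel9 : (substPow 9 eulerQ) ^ 3 = substPow 3 Tser * substPow 3 eulerQ := by
  have h := congrArg (substPow 3) kernel
  rw [sp_pow (by norm_num : (0:ℕ) < 3), sp_sp (by norm_num) (by norm_num),
    sp_mul (by norm_num : (0:ℕ) < 3)] at h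
  exact h

/-- the (1,0) mod 3 part of the hexagonal theta -/
noncomputable def Dser : PowerSeries ℤ :=
  PowerSeries.mk fun n =>
    (Set.ncard {p : ℤ × ℤ | p.1 ^ 2 + p.1 * p.2 + p.2 ^ 2 = (n : ℤ)
      ∧ p.1 % 3 = 1 ∧ p.2 % 3 = 0} : ℤ)

lemma latt_bound {x y : ℤ} {n : ℕ} (h : x^2 + x*y + y^2 = (n:ℤ)) :
    -((n:ℤ)+1) ≤ x ∧ x ≤ (n:ℤ)+1 ∧ -((n:ℤ)+1) ≤ y ∧ y ≤ (n:ℤ)+1 := by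
  have hn : (0:ℤ) ≤ (n:ℤ) := Int.natCast_nonneg n
  refine ⟨?_, ?_, ?_, ?_⟩
  · nlinarith [sq_nonneg (x + 2*y), sq_nonneg (x + ((n:ℤ)+1)), sq_nonneg x]
  · nlinarith [sq_nonneg (x + 2*y), sq_nonneg (x - ((n:ℤ)+1)), sq_nonneg x]
  · nlinarith [sq_nonneg (2*x + y), sq_nonneg (y + ((n:ℤ)+1)), sq_nonneg y]
  · nlinarith [sq_nonneg (2*x + y), sq_nonneg (y - ((n:ℤ)+1)), sq_nonneg y]

/-- the standard integer box -/
noncomputable def ibox (n : ℕ) : Finset (ℤ × ℤ) :=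
  Finset.Icc (-(n:ℤ)-1) ((n:ℤ)+1) ×ˢ Finset.Icc (-(n:ℤ)-1) ((n:ℤ)+1)

lemma mem_ibox {n : ℕ} {p : ℤ × ℤ} :
    p ∈ ibox n ↔ (-(n:ℤ)-1 ≤ p.1 ∧ p.1 ≤ (n:ℤ)+1) ∧ (-(n:ℤ)-1 ≤ p.2 ∧ p.2 ≤ (n:ℤ)+1) := by
  unfold ibox
  rw [Finset.mem_product, Finset.mem_Icc, Finset.mem_Icc]

lemma ncard_box (n : ℕ) (P : ℤ × ℤ → Prop) [DecidablePred P]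
    (hP : ∀ p : ℤ × ℤ, P p → p.1 ^ 2 + p.1 * p.2 + p.2 ^ 2 = (n : ℤ)) :
    (Set.ncard {p : ℤ × ℤ | P p} : ℤ) = (((ibox n).filter P).card : ℤ) := by
  congr 1
  rw [← Set.ncard_coe_finset]
  congr 1
  ext ⟨x, y⟩
  simp only [Set.mem_setOf_eq, Finset.coe_filter, Set.mem_setOf_eq, Finset.mem_coe]
  constructor
  · intro hmem
    have hb := latt_bound (hP _ hmem)
    refine ⟨mem_ibox.2 ⟨⟨?_, ?_⟩, ?_, ?_⟩, hmem⟩ <;> simp only <;> omega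
  · exact fun h => h.2

lemma aCubic_coeff (n : ℕ) :
    PowerSeries.coeff n aCubic
      = (((ibox n).filter (fun p : ℤ × ℤ => p.1 ^ 2 + p.1 * p.2 + p.2 ^ 2 = (n : ℤ))).card : ℤ) := by
  rw [aCubic, PowerSeries.coeff_mk]
  exact ncard_box n _ (fun p hp => hp)

lemma Dser_coeff (n : ℕ) :
    PowerSeries.coeff n Dser
      = (((ibox n).filter (fun p : ℤ × ℤ => p.1 ^ 2 + p.1 * p.2 + p.2 ^ 2 = (n : ℤ)
          ∧ p.1 % 3 = 1 ∧ p.2 % 3 = 0)).card : ℤ) := by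
  rw [Dser, PowerSeries.coeff_mk]
  exact ncard_box n _ (fun p hp => hp.1)

lemma Dser_eq : Dser = PowerSeries.X * substPow 3 Tser := by
  ext n
  rcases n with - | n
  · rw [Dser, PowerSeries.coeff_mk]
    have hz : PowerSeries.coeff 0 (PowerSeries.X * substPow 3 Tser) = 0 := by
      rw [mul_comm]
      simpa using PowerSeries.coeff_zero_mul_X (substPow 3 Tser)
    rw [hz]
    have : {p : ℤ × ℤ | p.1 ^ 2 + p.1 * p.2 + p.2 ^ 2 = ((0:ℕ) : ℤ)
        ∧ p.1 % 3 = 1 ∧ p.2 % 3 = 0} = ∅ := by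
      ext ⟨x, y⟩
      simp only [Set.mem_setOf_eq, Set.mem_empty_iff_false, iff_false, not_and]
      intro hQ
      have h4 : (2*x+y)^2 + 3*y^2 = 0 := by push_cast at hQ; linear_combination 4*hQ
      have hy : y = 0 := by nlinarith [sq_nonneg (2*x+y), sq_nonneg y]
      have hx : x = 0 := by nlinarith [sq_nonneg (2*x+y), sq_nonneg y]
      intro h1
      rw [hx] at h1
      omega
    rw [this]
    simp
  · rw [PowerSeries.coeff_succ_X_mul, sp_coeff, Dser_coeff]
    by_cases h3 : 3 ∣ n
    · obtain ⟨t, rfl⟩ := h3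
      rw [if_pos ⟨t, rfl⟩, Nat.mul_div_cancel_left _ (by norm_num : 0 < 3), Tser_coeff]
      congr 1
      apply Finset.card_bij' (i := fun p _ => ((p.2 / 3 : ℤ), ((p.1 - 1) / 3 : ℤ)))
        (j := fun c _ => ((3 * c.2 + 1 : ℤ), (3 * c.1 : ℤ)))
      · rintro ⟨m, p⟩ hmem
        simp only [Finset.mem_filter] at hmem
        obtain ⟨hbox, hQ, hm, hp⟩ := hmem
        simp only [Finset.mem_filter, Finset.mem_product, Finset.mem_Icc]
        have hm' : m = 3 * ((m - 1) / 3) + 1 := by omega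
        have hp' : p = 3 * (p / 3) := by omega
        set x := p / 3
        set y := (m - 1) / 3
        have hκ : 3 * (x^2 + x*y + y^2) + x + 2*y = (t : ℤ) := by
          have h9 : 3 * (3 * (x^2 + x*y + y^2) + x + 2*y) + 1 = 3 * (t:ℤ) + 1 := by
            rw [hm', hp'] at hQ
            push_cast at hQ
            linear_combination hQ
          linarith
        have hb := form_bound (n := t) (le_of_eq hκ)
        exact ⟨⟨⟨by omega, by omega⟩, by omega, by omega⟩, hκ⟩
      · rintro ⟨x, y⟩ hmem
        simp only [Finset.mem_filter, Finset.mem_product, Finset.mem_Icc] at hmem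
        obtain ⟨⟨⟨hx1, hx2⟩, hy1, hy2⟩, hκ⟩ := hmem
        simp only [Finset.mem_filter]
        have hQ : (3*y+1)^2 + (3*y+1)*(3*x) + (3*x)^2 = ((3*t+1 : ℕ) : ℤ) := by
          push_cast
          linear_combination 3 * hκ
        refine ⟨mem_ibox.2 ?_, hQ, by omega, by omega⟩
        have hb := latt_bound hQ
        constructor <;> constructor <;> simp only <;> omega
      · rintro ⟨m, p⟩ hmem
        simp only [Finset.mem_filter] at hmem
        obtain ⟨-, -, hm, hp⟩ := hmem
        simp only [Prod.mk.injEq]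
        constructor <;> omega
      · rintro ⟨x, y⟩ hmem
        simp only [Prod.mk.injEq]
        constructor <;> omega
    · rw [if_neg h3]
      have : ((ibox (n+1)).filter (fun p : ℤ × ℤ => p.1 ^ 2 + p.1 * p.2 + p.2 ^ 2 = ((n+1 : ℕ) : ℤ)
          ∧ p.1 % 3 = 1 ∧ p.2 % 3 = 0)) = ∅ := by
        apply Finset.filter_false_of_mem
        rintro ⟨m, p⟩ hmem
        rintro ⟨hQ, hm, hp⟩
        have hm' : m = 3 * ((m - 1) / 3) + 1 := by omega
        have hp' : p = 3 * (p / 3) := by omega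
        set x := p / 3
        set y := (m - 1) / 3
        have h9 : 3 * (3 * (x^2 + x*y + y^2) + x + 2*y) + 1 = ((n+1 : ℕ) : ℤ) := by
          rw [hm', hp'] at hQ
          linear_combination hQ
        have : (3:ℤ) ∣ (n:ℤ) := ⟨3 * (x^2 + x*y + y^2) + x + 2*y, by push_cast at h9 ⊢; linarith⟩
        exact h3 (by exact_mod_cast this)
      rw [this]
      simp

lemma rot_card {n : ℕ} (a b a' b' : ℤ)
    (hab : ∀ m p : ℤ, m % 3 = a → p % 3 = b → (-p) % 3 = a' ∧ (m + p) % 3 = b')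
    (hba : ∀ u v : ℤ, u % 3 = a' → v % 3 = b' → (u + v) % 3 = a ∧ (-u) % 3 = b) :
    ((ibox n).filter (fun q : ℤ × ℤ =>
        q.1^2 + q.1*q.2 + q.2^2 = (n:ℤ) ∧ q.1 % 3 = a ∧ q.2 % 3 = b)).card
      = ((ibox n).filter (fun q : ℤ × ℤ =>
        q.1^2 + q.1*q.2 + q.2^2 = (n:ℤ) ∧ q.1 % 3 = a' ∧ q.2 % 3 = b')).card := by
  apply Finset.card_bij' (i := fun q _ => ((-q.2, q.1 + q.2) : ℤ × ℤ))
    (j := fun q _ => ((q.1 + q.2, -q.1) : ℤ × ℤ))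
  · rintro ⟨m, p⟩ hmem
    simp only [Finset.mem_filter] at hmem ⊢
    obtain ⟨hb, hQ, h1, h2⟩ := hmem
    have hQ' : (-p)^2 + (-p)*(m+p) + (m+p)^2 = (n:ℤ) := by linear_combination hQ
    have hbd := latt_bound hQ'
    exact ⟨mem_ibox.2 ⟨⟨by omega, by omega⟩, by omega, by omega⟩, hQ',
      (hab m p h1 h2).1, (hab m p h1 h2).2⟩
  · rintro ⟨u, v⟩ hmem
    simp only [Finset.mem_filter] at hmem ⊢
    obtain ⟨hb, hQ, h1, h2⟩ := hmem
    have hQ' : (u+v)^2 + (u+v)*(-u) + (-u)^2 = (n:ℤ) := by linear_combination hQ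
    have hbd := latt_bound hQ'
    exact ⟨mem_ibox.2 ⟨⟨by omega, by omega⟩, by omega, by omega⟩, hQ',
      (hba u v h1 h2).1, (hba u v h1 h2).2⟩
  · rintro ⟨m, p⟩ _
    simp only [Prod.mk.injEq]
    constructor <;> ring
  · rintro ⟨u, v⟩ _
    simp only [Prod.mk.injEq]
    constructor <;> ring

/-- all six off-diagonal classes have the same count -/
lemma six_classes (n : ℕ) :
    ∀ (c : ℤ × ℤ), c ∈ ([((0:ℤ),(1:ℤ)), (2,1), (2,0), (0,2), (1,2)] : List (ℤ × ℤ)) →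
    ((ibox n).filter (fun q : ℤ × ℤ =>
        q.1^2 + q.1*q.2 + q.2^2 = (n:ℤ) ∧ q.1 % 3 = 1 ∧ q.2 % 3 = 0)).card
      = ((ibox n).filter (fun q : ℤ × ℤ =>
        q.1^2 + q.1*q.2 + q.2^2 = (n:ℤ) ∧ q.1 % 3 = c.1 ∧ q.2 % 3 = c.2)).card := by
  have h1 := rot_card (n := n) 1 0 0 1 (by intro m p h1 h2; omega) (by intro u v h1 h2; omega)
  have h2 := rot_card (n := n) 0 1 2 1 (by intro m p h1 h2; omega) (by intro u v h1 h2; omega)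
  have h3 := rot_card (n := n) 2 1 2 0 (by intro m p h1 h2; omega) (by intro u v h1 h2; omega)
  have h4 := rot_card (n := n) 2 0 0 2 (by intro m p h1 h2; omega) (by intro u v h1 h2; omega)
  have h5 := rot_card (n := n) 0 2 1 2 (by intro m p h1 h2; omega) (by intro u v h1 h2; omega)
  intro c hc
  fin_cases hc
  · exact h1
  · exact h1.trans h2
  · exact (h1.trans h2).trans h3
  · exact ((h1.trans h2).trans h3).trans h4
  · exact (((h1.trans h2).trans h3).trans h4).trans h5

open Classical in
lemma off_split (n : ℕ) :
    ((ibox n).filter (fun q : ℤ × ℤ =>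
        q.1^2 + q.1*q.2 + q.2^2 = (n:ℤ) ∧ ¬ (q.1 - q.2) % 3 = 0)).card
      = 6 * ((ibox n).filter (fun q : ℤ × ℤ =>
        q.1^2 + q.1*q.2 + q.2^2 = (n:ℤ) ∧ q.1 % 3 = 1 ∧ q.2 % 3 = 0)).card := by
  classical
  have hfib := Finset.card_eq_sum_card_fiberwise
    (s := (ibox n).filter (fun q : ℤ × ℤ =>
        q.1^2 + q.1*q.2 + q.2^2 = (n:ℤ) ∧ ¬ (q.1 - q.2) % 3 = 0))
    (t := ({((1:ℤ),(0:ℤ)), (0,1), (2,1), (2,0), (0,2), (1,2)} : Finset (ℤ × ℤ)))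
    (f := fun q => (q.1 % 3, q.2 % 3))
    (by
      rintro ⟨m, p⟩ hmem
      simp only [Finset.mem_coe, Finset.mem_filter] at hmem
      obtain ⟨-, -, hd⟩ := hmem
      simp only [Finset.mem_coe, Finset.mem_insert, Finset.mem_singleton, Prod.mk.injEq]
      omega)
  rw [hfib]
  have fib : ∀ a b : ℤ, (∀ u v : ℤ, u % 3 = a → v % 3 = b → ¬ (u - v) % 3 = 0) →
      (((ibox n).filter (fun q : ℤ × ℤ =>
          q.1^2 + q.1*q.2 + q.2^2 = (n:ℤ) ∧ ¬ (q.1 - q.2) % 3 = 0)).filter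
        (fun q => (q.1 % 3, q.2 % 3) = (a, b))).card
      = ((ibox n).filter (fun q : ℤ × ℤ =>
          q.1^2 + q.1*q.2 + q.2^2 = (n:ℤ) ∧ q.1 % 3 = a ∧ q.2 % 3 = b)).card := by
    intro a b hoff
    rw [Finset.filter_filter]
    congr 1
    apply Finset.filter_congr
    rintro ⟨m, p⟩ -
    simp only [Prod.mk.injEq]
    constructor
    · rintro ⟨⟨hQ, -⟩, h1, h2⟩
      exact ⟨hQ, h1, h2⟩
    · rintro ⟨hQ, h1, h2⟩
      exact ⟨⟨hQ, hoff m p h1 h2⟩, h1, h2⟩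
  have hs := six_classes n
  rw [Finset.sum_insert (by decide), Finset.sum_insert (by decide),
    Finset.sum_insert (by decide), Finset.sum_insert (by decide),
    Finset.sum_insert (by decide), Finset.sum_singleton]
  rw [fib 1 0 (by intro u v h1 h2; omega), fib 0 1 (by intro u v h1 h2; omega),
    fib 2 1 (by intro u v h1 h2; omega), fib 2 0 (by intro u v h1 h2; omega),
    fib 0 2 (by intro u v h1 h2; omega), fib 1 2 (by intro u v h1 h2; omega)]
  rw [← hs (0,1) (by simp), ← hs (2,1) (by simp), ← hs (2,0) (by simp),
    ← hs (0,2) (by simp), ← hs (1,2) (by simp)]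
  ring

open Classical in
lemma diag_card_dvd (t : ℕ) :
    ((ibox (3*t)).filter (fun q : ℤ × ℤ =>
        q.1^2 + q.1*q.2 + q.2^2 = ((3*t : ℕ):ℤ) ∧ (q.1 - q.2) % 3 = 0)).card
      = ((ibox t).filter (fun q : ℤ × ℤ => q.1^2 + q.1*q.2 + q.2^2 = (t:ℤ))).card := by
  apply Finset.card_bij' (i := fun q _ => ((q.1 + (q.2 - q.1)/3, (q.2 - q.1)/3) : ℤ × ℤ))
    (j := fun c _ => ((c.1 - c.2, c.1 + 2*c.2) : ℤ × ℤ))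
  · rintro ⟨m, p⟩ hmem
    simp only [Finset.mem_filter] at hmem ⊢
    obtain ⟨hb, hQ, hd⟩ := hmem
    have hm' : m = (m + (p - m)/3) - ((p - m)/3) := by omega
    have hp' : p = (m + (p - m)/3) + 2*((p - m)/3) := by omega
    set x := m + (p - m)/3
    set y := (p - m)/3
    have hQ' : x^2 + x*y + y^2 = (t:ℤ) := by
      have h9 : 3*(x^2 + x*y + y^2) = 3*(t:ℤ) := by
        rw [hm', hp'] at hQ
        push_cast at hQ
        linear_combination hQ
      linarith
    have hbd := latt_bound hQ'
    exact ⟨mem_ibox.2 ⟨⟨by omega, by omega⟩, by omega, by omega⟩, hQ'⟩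
  · rintro ⟨x, y⟩ hmem
    simp only [Finset.mem_filter] at hmem ⊢
    obtain ⟨hb, hQ⟩ := hmem
    have hQ' : (x - y)^2 + (x - y)*(x + 2*y) + (x + 2*y)^2 = ((3*t : ℕ):ℤ) := by
      push_cast
      linear_combination 3*hQ
    have hbd := latt_bound hQ'
    exact ⟨mem_ibox.2 ⟨⟨by omega, by omega⟩, by omega, by omega⟩, hQ', by omega⟩
  · rintro ⟨m, p⟩ hmem
    simp only [Finset.mem_filter] at hmem
    obtain ⟨-, -, hd⟩ := hmem
    simp only [Prod.mk.injEq]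
    constructor <;> omega
  · rintro ⟨x, y⟩ _
    simp only [Prod.mk.injEq]
    constructor <;> omega

open Classical in
lemma diag_card_not_dvd {n : ℕ} (h3 : ¬ 3 ∣ n) :
    ((ibox n).filter (fun q : ℤ × ℤ =>
        q.1^2 + q.1*q.2 + q.2^2 = (n:ℤ) ∧ (q.1 - q.2) % 3 = 0)).card = 0 := by
  rw [Finset.card_eq_zero]
  apply Finset.filter_false_of_mem
  rintro ⟨m, p⟩ hmem
  rintro ⟨hQ, hd⟩
  have hk : m = p + 3*((m - p)/3) := by omega
  set k := (m - p)/3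
  have : (3:ℤ) ∣ (n:ℤ) := ⟨p^2 + 3*k*p + 3*k^2, by rw [hk] at hQ; linear_combination -hQ⟩
  exact h3 (by exact_mod_cast this)

open Classical in
lemma aCubic_dissect : aCubic = substPow 3 aCubic + 6 * Dser := by
  ext n
  rw [map_add, sp_coeff]
  have h6 : PowerSeries.coeff n (6 * Dser) = 6 * PowerSeries.coeff n Dser := by
    rw [show (6 : PowerSeries ℤ) = PowerSeries.C (6:ℤ) from (map_ofNat (PowerSeries.C) 6).symm]
    exact PowerSeries.coeff_C_mul _ _ _
  rw [h6, aCubic_coeff, Dser_coeff]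
  have hsplit := Finset.card_filter_add_card_filter_not
    (s := (ibox n).filter (fun p : ℤ × ℤ => p.1 ^ 2 + p.1 * p.2 + p.2 ^ 2 = (n : ℤ)))
    (p := fun q : ℤ × ℤ => (q.1 - q.2) % 3 = 0)
  rw [Finset.filter_filter, Finset.filter_filter] at hsplit
  have hoff := off_split n
  by_cases h3 : 3 ∣ n
  · obtain ⟨t, rfl⟩ := h3
    rw [if_pos ⟨t, rfl⟩, Nat.mul_div_cancel_left _ (by norm_num : 0 < 3), aCubic_coeff]
    have hdiag := diag_card_dvd t
    push_cast
    push_cast at hsplit hoff hdiag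
    linarith
  · rw [if_neg h3]
    have hdiag := diag_card_not_dvd h3
    push_cast
    push_cast at hsplit hoff hdiag
    linarith

lemma DE3 : Dser * substPow 3 eulerQ = PowerSeries.X * (substPow 9 eulerQ)^3 := by
  rw [Dser_eq, kernel9]
  ring

/-- `a(q)⁶·(q³;q³)_∞ ≡ a(q³)⁶·(q³;q³)_∞ + 9q·a(q³)⁵·(q⁹;q⁹)_∞³ (mod 27)`
coefficientwise. -/
theorem aCubic_pow_six_congr (n : ℕ) :
    PowerSeries.coeff n (aCubic ^ 6 * substPow 3 eulerQ) ≡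
      PowerSeries.coeff n
        ((substPow 3 aCubic) ^ 6 * substPow 3 eulerQ +
          9 * PowerSeries.X * (substPow 3 aCubic) ^ 5 * (substPow 9 eulerQ) ^ 3)
      [ZMOD 27] := by
  have h1 := aCubic_dissect
  have h2 := DE3
  set A := substPow 3 aCubic with hA
  set E3 := substPow 3 eulerQ with hE3
  set E9 := substPow 9 eulerQ with hE9
  set G : PowerSeries ℤ := A^5 * (PowerSeries.X * E9^3) + 20 * A^4 * Dser^2 * E3
      + 160 * A^3 * Dser^3 * E3 + 720 * A^2 * Dser^4 * E3
      + 1728 * A * Dser^5 * E3 + 1728 * Dser^6 * E3 with hG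
  have key : aCubic ^ 6 * E3
      = (A ^ 6 * E3 + 9 * PowerSeries.X * A ^ 5 * E9 ^ 3) + 27 * G := by
    rw [h1, hG]
    linear_combination (36 * A^5) * h2
  rw [key, map_add]
  have h27 : PowerSeries.coeff n (27 * G) = 27 * PowerSeries.coeff n G := by
    rw [show (27 : PowerSeries ℤ) = PowerSeries.C (27:ℤ) from
      (map_ofNat (PowerSeries.C) 27).symm]
    exact PowerSeries.coeff_C_mul _ _ _
  rw [h27]
  exact Int.ModEq.symm (Int.modEq_iff_dvd.mpr ⟨PowerSeries.coeff n G, by ring⟩)
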